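/- arXiv:1511.09258 — 3 statements merged into one kernel-verified Lean document; each statement's English description precedes it below -/
import Mathlib

section
/- Let (M, Ω) be a symplectic manifold, ∇ a torsion-free affine connection with ∇Ω = 0, and X a vector field with L_X∇ = 0. Then the 2-form dX^♭ is ∇-parallel: ∇(dX^♭) = 0, where X^♭ = Ω(X, ·). -/
/-!
Statement 5: Let `(M, Ω)` be a symplectic manifold, `∇` a torsion-free affine connection
with `∇Ω = 0`, and `X` a vector field with `L_X ∇ = 0`.  Then the 2-form `d X^♭` is
`∇`-parallel, where `X^♭ = Ω(X, ·)`.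

The 2-form `dX^♭` is given on vector fields by the invariant formula
`dX^♭(Y,Z) = Y(X^♭(Z)) − Z(X^♭(Y)) − X^♭([Y,Z])`, and `∇ (dX^♭) = 0` means
`W(dX^♭(Y,Z)) − dX^♭(∇_W Y, Z) − dX^♭(Y, ∇_W Z) = 0` for all vector fields `W, Y, Z`.
-/

open scoped Manifold

section

variable (E : Type*) [NormedAddCommGroup E] [NormedSpace ℝ E]
  (M : Type*) [TopologicalSpace M] [ChartedSpace E M]
  [IsManifold 𝓘(ℝ, E) ((⊤ : ℕ∞) : WithTop ℕ∞) M]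

/-- A vector field `V : M → E` is smooth if the corresponding section of the tangent
bundle is smooth. -/
def IsSmoothVF (V : M → E) : Prop :=
  ContMDiff 𝓘(ℝ, E) 𝓘(ℝ, E).tangent (⊤ : ℕ∞)
    (fun x => (⟨x, V x⟩ : TangentBundle 𝓘(ℝ, E) M))

/-- A function `f : M → ℝ` is smooth. -/
def IsSmoothF (f : M → ℝ) : Prop := ContMDiff 𝓘(ℝ, E) 𝓘(ℝ, ℝ) (⊤ : ℕ∞) f

variable {E M}

/-- The action of a vector field on a function by directional derivative. -/
noncomputable def vact (V : M → E) (f : M → ℝ) : M → ℝ :=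
  fun x => mfderiv 𝓘(ℝ, E) 𝓘(ℝ, ℝ) f x (V x)

/-- `lie` is the Lie bracket operation on vector fields: it sends smooth vector fields to
smooth vector fields and satisfies `[X,Y] f = X (Y f) - Y (X f)` on smooth functions. -/
def IsLieBracketOp (lie : (M → E) → (M → E) → (M → E)) : Prop :=
  ∀ X Y, IsSmoothVF E M X → IsSmoothVF E M Y →
    IsSmoothVF E M (lie X Y) ∧
      ∀ f, IsSmoothF E M f → vact (lie X Y) f = vact X (vact Y f) - vact Y (vact X f)

/-- `∇` is an affine connection (covariant derivative operator) on vector fields. -/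
structure IsConnection (nabla : (M → E) → (M → E) → (M → E)) : Prop where
  smooth : ∀ X Y, IsSmoothVF E M X → IsSmoothVF E M Y → IsSmoothVF E M (nabla X Y)
  addLeft : ∀ X X' Y, IsSmoothVF E M X → IsSmoothVF E M X' → IsSmoothVF E M Y →
    nabla (X + X') Y = nabla X Y + nabla X' Y
  smulLeft : ∀ (f : M → ℝ) X Y, IsSmoothF E M f → IsSmoothVF E M X → IsSmoothVF E M Y →
    nabla (fun x => f x • X x) Y = fun x => f x • nabla X Y x
  addRight : ∀ X Y Y', IsSmoothVF E M X → IsSmoothVF E M Y → IsSmoothVF E M Y' →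
    nabla X (Y + Y') = nabla X Y + nabla X Y'
  leibniz : ∀ (f : M → ℝ) X Y, IsSmoothF E M f → IsSmoothVF E M X → IsSmoothVF E M Y →
    nabla X (fun x => f x • Y x) = fun x => vact X f x • Y x + f x • nabla X Y x

/-- `∇` is torsion-free: `∇_X Y - ∇_Y X = [X, Y]`. -/
def IsTorsionFree (lie nabla : (M → E) → (M → E) → (M → E)) : Prop :=
  ∀ X Y, IsSmoothVF E M X → IsSmoothVF E M Y → nabla X Y - nabla Y X = lie X Y

/-- `Ω` is a symplectic form: a smooth, antisymmetric, (pointwise) nondegenerate, closed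
2-form.  Closedness is expressed by the invariant formula for the exterior derivative. -/
structure IsSymplecticForm (lie : (M → E) → (M → E) → (M → E))
    (Ω : M → (E →ₗ[ℝ] E →ₗ[ℝ] ℝ)) : Prop where
  smooth : ∀ Y Z, IsSmoothVF E M Y → IsSmoothVF E M Z →
    IsSmoothF E M (fun x => Ω x (Y x) (Z x))
  antisymm : ∀ (x : M) (u v : E), Ω x u v = - Ω x v u
  nondeg : ∀ (x : M) (u : E), (∀ v : E, Ω x u v = 0) → u = 0
  closed : ∀ X Y Z, IsSmoothVF E M X → IsSmoothVF E M Y → IsSmoothVF E M Z → ∀ x : M,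
    vact X (fun p => Ω p (Y p) (Z p)) x - vact Y (fun p => Ω p (X p) (Z p)) x
      + vact Z (fun p => Ω p (X p) (Y p)) x
      - Ω x (lie X Y x) (Z x) + Ω x (lie X Z x) (Y x) - Ω x (lie Y Z x) (X x) = 0

/-- `∇ Ω = 0`: the connection `∇` preserves the 2-form `Ω`. -/
def ConnPreservesForm (nabla : (M → E) → (M → E) → (M → E))
    (Ω : M → (E →ₗ[ℝ] E →ₗ[ℝ] ℝ)) : Prop :=
  ∀ X Y Z, IsSmoothVF E M X → IsSmoothVF E M Y → IsSmoothVF E M Z → ∀ x : M,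
    vact X (fun p => Ω p (Y p) (Z p)) x = Ω x (nabla X Y x) (Z x) + Ω x (Y x) (nabla X Z x)

/-- `L_X ∇ = 0`: `X` is an infinitesimal affine automorphism of `∇`, where
`(L_X∇)(Y,Z) = [X, ∇_Y Z] − ∇_{[X,Y]} Z − ∇_Y [X,Z]`. -/
def LieDerivConnZero (lie nabla : (M → E) → (M → E) → (M → E)) (X : M → E) : Prop :=
  ∀ Y Z, IsSmoothVF E M Y → IsSmoothVF E M Z →
    lie X (nabla Y Z) - nabla (lie X Y) Z - nabla Y (lie X Z) = 0

/-- `L_X Ω = 0`: `X` is a symplectic vector field, where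
`(L_XΩ)(Y,Z) = X(Ω(Y,Z)) − Ω([X,Y],Z) − Ω(Y,[X,Z])`. -/
def LieDerivFormZero (lie : (M → E) → (M → E) → (M → E))
    (Ω : M → (E →ₗ[ℝ] E →ₗ[ℝ] ℝ)) (X : M → E) : Prop :=
  ∀ Y Z, IsSmoothVF E M Y → IsSmoothVF E M Z → ∀ x : M,
    vact X (fun p => Ω p (Y p) (Z p)) x - Ω x (lie X Y x) (Z x) - Ω x (Y x) (lie X Z x) = 0

end

section
variable {E : Type*} [NormedAddCommGroup E] [NormedSpace ℝ E]
  {M : Type*} [TopologicalSpace M] [ChartedSpace E M]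
  [IsManifold 𝓘(ℝ, E) ((⊤ : ℕ∞) : WithTop ℕ∞) M]

/-- The 2-form `d X^♭` evaluated on the pair of vector fields `(Y, Z)`, where
`X^♭ = Ω(X, ·)`. -/
noncomputable def dXflat (lie : (M → E) → (M → E) → (M → E))
    (Ω : M → (E →ₗ[ℝ] E →ₗ[ℝ] ℝ)) (X Y Z : M → E) : M → ℝ :=
  fun x => vact Y (fun p => Ω p (X p) (Z p)) x - vact Z (fun p => Ω p (X p) (Y p)) x
    - Ω x (X x) (lie Y Z x)

end

section
set_option linter.unusedSectionVars false
set_option maxHeartbeats 1000000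

variable {E : Type*} [NormedAddCommGroup E] [NormedSpace ℝ E]
  {M : Type*} [TopologicalSpace M] [ChartedSpace E M]
  [IsManifold 𝓘(ℝ, E) ((⊤ : ℕ∞) : WithTop ℕ∞) M]

theorem vact_sub' (V : M → E) {f g : M → ℝ} (hf : IsSmoothF E M f) (hg : IsSmoothF E M g)
    (x : M) : vact V (fun p => f p - g p) x = vact V f x - vact V g x := by
  have hf' := hf.mdifferentiableAt (x := x) (by simp)
  have hg' := hg.mdifferentiableAt (x := x) (by simp)
  show vact V (f - g) x = _
  simp only [vact, mfderiv_sub hf' hg']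
  rfl

theorem vact_add' (V : M → E) {f g : M → ℝ} (hf : IsSmoothF E M f) (hg : IsSmoothF E M g)
    (x : M) : vact V (fun p => f p + g p) x = vact V f x + vact V g x := by
  have hf' := hf.mdifferentiableAt (x := x) (by simp)
  have hg' := hg.mdifferentiableAt (x := x) (by simp)
  show vact V (f + g) x = _
  simp only [vact, mfderiv_add hf' hg']
  rfl

end

theorem stmt5
    {E : Type*} [NormedAddCommGroup E] [NormedSpace ℝ E] [FiniteDimensional ℝ E]
    {M : Type*} [TopologicalSpace M] [ChartedSpace E M] [T2Space M]
    [IsManifold 𝓘(ℝ, E) ((⊤ : ℕ∞) : WithTop ℕ∞) M]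
    (lie : (M → E) → (M → E) → (M → E)) (hlie : IsLieBracketOp lie)
    (Ω : M → (E →ₗ[ℝ] E →ₗ[ℝ] ℝ)) (hΩ : IsSymplecticForm lie Ω)
    (nabla : (M → E) → (M → E) → (M → E)) (hconn : IsConnection nabla)
    (htf : IsTorsionFree lie nabla) (hpres : ConnPreservesForm nabla Ω)
    (X : M → E) (hX : IsSmoothVF E M X)
    (hauto : LieDerivConnZero lie nabla X) :
    ∀ W Y Z, IsSmoothVF E M W → IsSmoothVF E M Y → IsSmoothVF E M Z → ∀ x : M,
      vact W (dXflat lie Ω X Y Z) x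
        - dXflat lie Ω X (nabla W Y) Z x - dXflat lie Ω X Y (nabla W Z) x = 0 := by
  -- Step A: `dXflat` simplifies via `∇Ω = 0` and torsion-freeness.
  have keyA : ∀ Y Z, IsSmoothVF E M Y → IsSmoothVF E M Z →
      dXflat lie Ω X Y Z = fun x => Ω x (nabla Y X x) (Z x) - Ω x (nabla Z X x) (Y x) := by
    intro Y Z hY hZ
    funext x
    have h1 := hpres Y X Z hY hX hZ x
    have h2 := hpres Z X Y hZ hX hY x
    have h3 := congrFun (htf Y Z hY hZ) x
    simp only [Pi.sub_apply] at h3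
    simp only [dXflat, h1, h2, ← h3, map_sub, LinearMap.sub_apply]
    ring
  -- subtraction in the first argument of nabla
  have hsub1 : ∀ A B Z, IsSmoothVF E M A → IsSmoothVF E M B → IsSmoothVF E M Z →
      nabla (lie A B) Z = nabla (nabla A B) Z - nabla (nabla B A) Z := by
    intro A B Z hA hB hZ
    have h := htf A B hA hB
    have hBA := hconn.smooth B A hB hA
    have hlieAB := (hlie A B hA hB).1
    have hsum : lie A B + nabla B A = nabla A B := by rw [← h]; abel
    have := hconn.addLeft (lie A B) (nabla B A) Z hlieAB hBA hZ
    rw [hsum] at this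
    rw [this]; abel
  -- subtraction in the second argument of nabla
  have hsub2 : ∀ Y A B, IsSmoothVF E M Y → IsSmoothVF E M A → IsSmoothVF E M B →
      nabla Y (lie A B) = nabla Y (nabla A B) - nabla Y (nabla B A) := by
    intro Y A B hY hA hB
    have h := htf A B hA hB
    have hBA := hconn.smooth B A hB hA
    have hlieAB := (hlie A B hA hB).1
    have hsum : lie A B + nabla B A = nabla A B := by rw [← h]; abel
    have := hconn.addRight Y (lie A B) (nabla B A) hY hlieAB hBA
    rw [hsum] at this
    rw [this]; abel
  -- Step (i): the affine condition turns the Hessian of X into curvature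
  have keyS : ∀ Y Z, IsSmoothVF E M Y → IsSmoothVF E M Z →
      nabla Y (nabla Z X) - nabla (nabla Y Z) X
        = nabla Y (nabla X Z) - nabla X (nabla Y Z) - nabla (lie Y X) Z := by
    intro Y Z hY hZ
    have h₁ := hauto Y Z hY hZ
    have h₂ := htf X (nabla Y Z) hX (hconn.smooth Y Z hY hZ)
    have h₃ := hsub1 X Y Z hX hY hZ
    have h₄ := hsub2 Y X Z hY hX hZ
    have h₅ := hsub1 Y X Z hY hX hZ
    rw [h₃, h₄, ← h₂] at h₁
    rw [h₅, ← sub_eq_zero]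
    calc nabla Y (nabla Z X) - nabla (nabla Y Z) X -
          (nabla Y (nabla X Z) - nabla X (nabla Y Z) -
            (nabla (nabla Y X) Z - nabla (nabla X Y) Z))
        = nabla X (nabla Y Z) - nabla (nabla Y Z) X -
            (nabla (nabla X Y) Z - nabla (nabla Y X) Z) -
            (nabla Y (nabla X Z) - nabla Y (nabla Z X)) := by abel
      _ = 0 := h₁
  -- Step (ii): curvature is skew w.r.t. Ω (since ∇Ω = 0)
  have keySkew : ∀ A B Y Z, IsSmoothVF E M A → IsSmoothVF E M B →
      IsSmoothVF E M Y → IsSmoothVF E M Z → ∀ x : M,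
      Ω x (nabla A (nabla B Y) x - nabla B (nabla A Y) x - nabla (lie A B) Y x) (Z x)
        + Ω x (Y x) (nabla A (nabla B Z) x - nabla B (nabla A Z) x - nabla (lie A B) Z x)
        = 0 := by
    intro A B Y Z hA hB hY hZ x
    have hf : IsSmoothF E M (fun p => Ω p (Y p) (Z p)) := hΩ.smooth Y Z hY hZ
    have hlieAB := (hlie A B hA hB).1
    have hbr := congrFun ((hlie A B hA hB).2 _ hf) x
    simp only [Pi.sub_apply] at hbr
    have hL := hpres (lie A B) Y Z hlieAB hY hZ x
    -- expand A (B f)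
    have hBf : vact B (fun p => Ω p (Y p) (Z p))
        = fun p => Ω p (nabla B Y p) (Z p) + Ω p (Y p) (nabla B Z p) :=
      funext (hpres B Y Z hB hY hZ)
    have hAf : vact A (fun p => Ω p (Y p) (Z p))
        = fun p => Ω p (nabla A Y p) (Z p) + Ω p (Y p) (nabla A Z p) :=
      funext (hpres A Y Z hA hY hZ)
    have hAB : vact A (vact B (fun p => Ω p (Y p) (Z p))) x
        = Ω x (nabla A (nabla B Y) x) (Z x) + Ω x (nabla B Y x) (nabla A Z x)
          + (Ω x (nabla A Y x) (nabla B Z x) + Ω x (Y x) (nabla A (nabla B Z) x)) := by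
      rw [hBf, vact_add' A (hΩ.smooth _ _ (hconn.smooth B Y hB hY) hZ)
        (hΩ.smooth _ _ hY (hconn.smooth B Z hB hZ)) x,
        hpres A (nabla B Y) Z hA (hconn.smooth B Y hB hY) hZ x,
        hpres A Y (nabla B Z) hA hY (hconn.smooth B Z hB hZ) x]
    have hBA : vact B (vact A (fun p => Ω p (Y p) (Z p))) x
        = Ω x (nabla B (nabla A Y) x) (Z x) + Ω x (nabla A Y x) (nabla B Z x)
          + (Ω x (nabla B Y x) (nabla A Z x) + Ω x (Y x) (nabla B (nabla A Z) x)) := by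
      rw [hAf, vact_add' B (hΩ.smooth _ _ (hconn.smooth A Y hA hY) hZ)
        (hΩ.smooth _ _ hY (hconn.smooth A Z hA hZ)) x,
        hpres B (nabla A Y) Z hB (hconn.smooth A Y hA hY) hZ x,
        hpres B Y (nabla A Z) hB hY (hconn.smooth A Z hA hZ) x]
    rw [hAB, hBA] at hbr
    simp only [map_sub, LinearMap.sub_apply]
    linarith [hbr, hL]
  -- Final assembly
  intro W Y Z hW hY hZ x
  have hWY := hconn.smooth W Y hW hY
  have hWZ := hconn.smooth W Z hW hZ
  have hYX := hconn.smooth Y X hY hX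
  have hZX := hconn.smooth Z X hZ hX
  rw [keyA Y Z hY hZ, keyA (nabla W Y) Z hWY hZ, keyA Y (nabla W Z) hY hWZ,
    vact_sub' W (hΩ.smooth _ _ hYX hZ) (hΩ.smooth _ _ hZX hY) x,
    hpres W (nabla Y X) Z hW hYX hZ x, hpres W (nabla Z X) Y hW hZX hY x]
  -- scalar consequences of keyS
  have sY := congrFun (keyS W Y hW hY) x
  have sZ := congrFun (keyS W Z hW hZ) x
  simp only [Pi.sub_apply] at sY sZ
  have eY := congrArg (fun u => Ω x u (Z x)) sY
  have eZ := congrArg (fun u => Ω x u (Y x)) sZ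
  simp only [map_sub, LinearMap.sub_apply] at eY eZ
  have skew := keySkew W X Y Z hW hX hY hZ x
  simp only [map_sub, LinearMap.sub_apply] at skew
  have anti := hΩ.antisymm x (Y x)
    (nabla W (nabla X Z) x - nabla X (nabla W Z) x - nabla (lie W X) Z x)
  simp only [map_sub, LinearMap.sub_apply, map_neg, LinearMap.neg_apply] at anti
  beta_reduce
  linarith [eY, eZ, skew, anti]
end

section
/- Let g be the 4-dimensional real Lie algebra with basis E₁, E₂, E₃, E₄ whose only nonzero bracket among basis elements is [E₂, E₄] = −E₁, and for β ∈ ℝ let ∇ be the bilinear map g × g → g with ∇_{E₄}E₂ = −(β − 2/3)E₁, ∇_{E₂}E₄ = −(β + 1/3)E₁, ∇_{E₂}E₂ = −(β + 1/3)E₃, and all other covariant derivatives of basis elements zero. Then ∇ is flat: ∇_X(∇_Y Z) − ∇_Y(∇_X Z) − ∇_{[X,Y]}Z = 0 for all X, Y, Z ∈ g. -/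
/-!
Statement 14: With `g` and `∇` as described (only nonzero basis bracket
`⁅E₂, E₄⁆ = −E₁`; `∇_{E₄}E₂ = −(β−2/3)E₁`, `∇_{E₂}E₄ = −(β+1/3)E₁`,
`∇_{E₂}E₂ = −(β+1/3)E₃`, all other covariant derivatives of basis elements zero), the map
`∇` is flat: `∇_X(∇_Y Z) − ∇_Y(∇_X Z) − ∇_{⁅X,Y⁆}Z = 0` for all `X, Y, Z ∈ g`.
-/

theorem stmt14
    (g : Type*) [LieRing g] [LieAlgebra ℝ g]
    -- `E 0, E 1, E 2, E 3` is the basis `E₁, E₂, E₃, E₄`; the only nonzero bracket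
    -- among basis elements is `⁅E₂, E₄⁆ = −E₁`
    (E : Module.Basis (Fin 4) ℝ g)
    (hbracket : ∀ i j : Fin 4, ⁅E i, E j⁆ =
      if i = 1 ∧ j = 3 then -(E 0) else if i = 3 ∧ j = 1 then E 0 else 0)
    (β : ℝ) (nabla : g →ₗ[ℝ] g →ₗ[ℝ] g)
    -- `∇_{E₄}E₂ = −(β − 2/3)E₁`, `∇_{E₂}E₄ = −(β + 1/3)E₁`, `∇_{E₂}E₂ = −(β + 1/3)E₃`,
    -- and all other covariant derivatives of basis elements vanish
    (h42 : nabla (E 3) (E 1) = (-(β - 2/3)) • E 0)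
    (h24 : nabla (E 1) (E 3) = (-(β + 1/3)) • E 0)
    (h22 : nabla (E 1) (E 1) = (-(β + 1/3)) • E 2)
    (hother : ∀ i j : Fin 4,
      ¬((i = 3 ∧ j = 1) ∨ (i = 1 ∧ j = 3) ∨ (i = 1 ∧ j = 1)) → nabla (E i) (E j) = 0) :
    ∀ X Y Z : g, nabla X (nabla Y Z) - nabla Y (nabla X Z) - nabla ⁅X, Y⁆ Z = 0 := by

  have hnab : ∀ i j : Fin 4, nabla (E i) (E j) =
      if i = 3 ∧ j = 1 then (-(β - 2/3)) • E 0
      else if i = 1 ∧ j = 3 then (-(β + 1/3)) • E 0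
      else if i = 1 ∧ j = 1 then (-(β + 1/3)) • E 2
      else 0 := by
    intro i j
    split_ifs with h1 h2 h3
    · obtain ⟨rfl, rfl⟩ := h1; exact h42
    · obtain ⟨rfl, rfl⟩ := h2; exact h24
    · obtain ⟨rfl, rfl⟩ := h3; exact h22
    · exact hother i j (by tauto)
  have key : ∀ i j k : Fin 4,
      nabla (E i) (nabla (E j) (E k)) - nabla (E j) (nabla (E i) (E k))
        - nabla ⁅E i, E j⁆ (E k) = 0 := by
    intro i j k
    fin_cases i <;> fin_cases j <;> fin_cases k <;>
      simp [hnab, hbracket, map_smul, map_neg]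
  let B : g →ₗ[ℝ] g →ₗ[ℝ] (g →ₗ[ℝ] g) := LinearMap.mk₂ ℝ
    (fun X Y => (nabla X).comp (nabla Y) - (nabla Y).comp (nabla X) - nabla ⁅X, Y⁆)
    (by intro X X' Y; ext z; simp [add_lie]; abel)
    (by intro c X Y; ext z; simp [smul_lie]; module)
    (by intro X Y Y'; ext z; simp [lie_add]; abel)
    (by intro c X Y; ext z; simp [lie_smul]; module)
  have hB : B = 0 := by
    apply LinearMap.ext_basis E E
    intro i j
    apply E.ext
    intro k
    have := key i j k
    simpa [B, LinearMap.mk₂_apply, LinearMap.sub_apply] using this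
  intro X Y Z
  have h := congrFun (congrArg DFunLike.coe (congrFun (congrArg DFunLike.coe (congrFun (congrArg DFunLike.coe hB) X)) Y)) Z
  simpa [B, LinearMap.mk₂_apply, LinearMap.sub_apply] using h
end

section
/- Let g be the 4-dimensional real Lie algebra with basis E₁, E₂, E₃, E₄ whose only nonzero bracket among basis elements is [E₂, E₄] = −E₁, and for β ∈ ℝ let ∇ be the bilinear map g × g → g with ∇_{E₄}E₂ = −(β − 2/3)E₁, ∇_{E₂}E₄ = −(β + 1/3)E₁, ∇_{E₂}E₂ = −(β + 1/3)E₃, and all other covariant derivatives of basis elements zero. Then every X ∈ g is an infinitesimal affine automorphism of ∇: for all X, Y, Z ∈ g, [X, ∇_Y Z] − ∇_{[X,Y]}Z − ∇_Y([X,Z]) = 0. -/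
/-!
Statement 15: With `g` and `∇` as described (only nonzero basis bracket
`⁅E₂, E₄⁆ = −E₁`; `∇_{E₄}E₂ = −(β−2/3)E₁`, `∇_{E₂}E₄ = −(β+1/3)E₁`,
`∇_{E₂}E₂ = −(β+1/3)E₃`, all other covariant derivatives of basis elements zero), every
`X ∈ g` is an infinitesimal affine automorphism of `∇`: for all `X, Y, Z ∈ g`,
`⁅X, ∇_Y Z⁆ − ∇_{⁅X,Y⁆}Z − ∇_Y(⁅X,Z⁆) = 0`.
-/

theorem stmt15
    (g : Type*) [LieRing g] [LieAlgebra ℝ g]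
    -- `E 0, E 1, E 2, E 3` is the basis `E₁, E₂, E₃, E₄`; the only nonzero bracket
    -- among basis elements is `⁅E₂, E₄⁆ = −E₁`
    (E : Module.Basis (Fin 4) ℝ g)
    (hbracket : ∀ i j : Fin 4, ⁅E i, E j⁆ =
      if i = 1 ∧ j = 3 then -(E 0) else if i = 3 ∧ j = 1 then E 0 else 0)
    (β : ℝ) (nabla : g →ₗ[ℝ] g →ₗ[ℝ] g)
    -- `∇_{E₄}E₂ = −(β − 2/3)E₁`, `∇_{E₂}E₄ = −(β + 1/3)E₁`, `∇_{E₂}E₂ = −(β + 1/3)E₃`,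
    -- and all other covariant derivatives of basis elements vanish
    (h42 : nabla (E 3) (E 1) = (-(β - 2/3)) • E 0)
    (h24 : nabla (E 1) (E 3) = (-(β + 1/3)) • E 0)
    (h22 : nabla (E 1) (E 1) = (-(β + 1/3)) • E 2)
    (hother : ∀ i j : Fin 4,
      ¬((i = 3 ∧ j = 1) ∨ (i = 1 ∧ j = 3) ∨ (i = 1 ∧ j = 1)) → nabla (E i) (E j) = 0) :
    ∀ X Y Z : g, ⁅X, nabla Y Z⁆ - nabla ⁅X, Y⁆ Z - nabla Y ⁅X, Z⁆ = 0 := by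
  -- basic vanishing facts
  have hb0 : ∀ i : Fin 4, ⁅E i, E 0⁆ = (0 : g) := by
    intro i; rw [hbracket]; simp
  have hb2 : ∀ i : Fin 4, ⁅E i, E 2⁆ = (0 : g) := by
    intro i; rw [hbracket]; simp
  have hn0r : ∀ j : Fin 4, nabla (E j) (E 0) = 0 := by
    intro j; exact hother j 0 (by rintro (⟨_, h⟩ | ⟨_, h⟩ | ⟨_, h⟩) <;> exact absurd h (by decide))
  have hn0l : ∀ k : Fin 4, nabla (E 0) (E k) = 0 := by
    intro k; exact hother 0 k (by rintro (⟨h, _⟩ | ⟨h, _⟩ | ⟨h, _⟩) <;> exact absurd h (by decide))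
  have key1 : ∀ i j k : Fin 4, ⁅E i, nabla (E j) (E k)⁆ = 0 := by
    intro i j k
    by_cases h1 : j = 3 ∧ k = 1
    · obtain ⟨rfl, rfl⟩ := h1; rw [h42, lie_smul, hb0, smul_zero]
    by_cases h2 : j = 1 ∧ k = 3
    · obtain ⟨rfl, rfl⟩ := h2; rw [h24, lie_smul, hb0, smul_zero]
    by_cases h3 : j = 1 ∧ k = 1
    · obtain ⟨rfl, rfl⟩ := h3; rw [h22, lie_smul, hb2, smul_zero]
    · rw [hother j k (by tauto), lie_zero]
  have key2 : ∀ i j k : Fin 4, nabla ⁅E i, E j⁆ (E k) = 0 := by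
    intro i j k
    rw [hbracket]
    split_ifs <;> simp [hn0l]
  have key3 : ∀ i j k : Fin 4, nabla (E j) ⁅E i, E k⁆ = 0 := by
    intro i j k
    rw [hbracket]
    split_ifs <;> simp [hn0r]
  -- the trilinear map
  set T : g →ₗ[ℝ] g →ₗ[ℝ] g →ₗ[ℝ] g :=
    LinearMap.mk₂ ℝ
      (fun X Y => (LieAlgebra.ad ℝ g X).comp (nabla Y) - nabla ⁅X, Y⁆
        - (nabla Y).comp (LieAlgebra.ad ℝ g X))
      (by intro X X' Y; ext z; simp [add_lie, lie_add]; abel)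
      (by intro c X Y; ext z; simp [smul_lie, lie_smul]; module)
      (by intro X Y Y'; ext z; simp [lie_add, add_lie]; abel)
      (by intro c X Y; ext z; simp [lie_smul, smul_lie]; module)
    with hTdef
  have hT : T = 0 := by
    refine E.ext fun i => ?_
    refine E.ext fun j => ?_
    refine E.ext fun k => ?_
    simp [hTdef, LinearMap.mk₂_apply, LieAlgebra.ad_apply, key1 i j k, key2 i j k, key3 i j k]
  intro X Y Z
  have := LinearMap.congr_fun (LinearMap.congr_fun (LinearMap.congr_fun hT X) Y) Z
  simpa [hTdef, LinearMap.mk₂_apply, LieAlgebra.ad_apply, sub_eq_zero] using this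
end
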